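/- The GrowingHedge algorithm with weights π_i = 1/(τ_i · m_{τ_i}) achieves, for every T ≥ 1 and every expert i ≤ M_T, the regret bound Σ_{t=τ_i}^T (ℓ_t − ℓ_{i,t}) ≤ (1/η) log m_{τ_i} + (1/η) log τ_i + (1/η) log(1 + log T). -/

import Mathlib

open Finset

lemma ghp_sum_fin_icc {A : Type*} [AddCommMonoid A] (N : ℕ) (f : ℕ → A) :
    ∑ k : Fin N, f (k.1 + 1) = ∑ j ∈ Finset.Icc 1 N, f j := by
  rw [← Finset.Ico_add_one_right_eq_Icc, Finset.sum_Ico_eq_sum_range,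
    Fin.sum_univ_eq_sum_range (fun k => f (k + 1))]
  simp [add_comm]

lemma ghp_Ioc_zero (n : ℕ) : Finset.Ioc 0 n = Finset.Icc 1 n := by
  ext x; simp only [Finset.mem_Ioc, Finset.mem_Icc]; omega

lemma ghp_exp_mul (η a b : ℝ) :
    Real.exp (η * (a + b)) = Real.exp (η * a) * Real.exp (η * b) := by
  rw [← Real.exp_add, mul_add]

lemma ghp_harm_le (T : ℕ) :
    ∑ s ∈ Finset.Icc 1 T, (1 / (s : ℝ)) ≤ 1 + Real.log T := by
  have h := harmonic_le_one_add_log T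
  have he : (harmonic T : ℝ) = ∑ s ∈ Finset.Icc 1 T, (1 / (s : ℝ)) := by
    rw [harmonic_eq_sum_Icc]
    push_cast
    simp [one_div]
  linarith

lemma ghp_harm_pos (T : ℕ) (hT : 1 ≤ T) :
    0 < ∑ s ∈ Finset.Icc 1 T, (1 / (s : ℝ)) := by
  apply Finset.sum_pos
  · intro s hs
    simp only [Finset.mem_Icc] at hs
    have : 0 < s := hs.1
    positivity
  · exact ⟨1, by simp [hT]⟩

section Main

variable {E : Type*} [AddCommGroup E] [Module ℝ E] {Y : Type*}
    (X : Set E) (ℓ : E → Y → ℝ) (η : ℝ) (hη : 0 < η)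
    (M : ℕ → ℕ) (w : ℕ → ℕ → ℝ) (xe : ℕ → ℕ → E) (y : ℕ → Y) (xl : ℕ → E)

/-- the one-step potential decrease from exp-concavity -/
lemma ghp_step
    (hexp : ∀ (yy : Y) (N : ℕ), 1 ≤ N → ∀ xs : Fin N → E, (∀ i, xs i ∈ X) →
      ∀ vv : Fin N → ℝ, (∀ i, 0 ≤ vv i) → (∑ i, vv i) = 1 →
      ℓ (∑ i, vv i • xs i) yy ≤ -(1/η) * Real.log (∑ i, vv i * Real.exp (-η * ℓ (xs i) yy)))
    (hxe : ∀ i t, 1 ≤ t → 1 ≤ i → i ≤ M t → xe i t ∈ X)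
    (hwupd : ∀ t, 1 ≤ t → ∀ i, 1 ≤ i → i ≤ M t →
      w i (t+1) = w i t * Real.exp (-η * ℓ (xe i t) (y t)))
    (hxl : ∀ t, 1 ≤ t → xl t =
      (∑ i ∈ Finset.Icc 1 (M t), w i t)⁻¹ •
        ∑ i ∈ Finset.Icc 1 (M t), w i t • xe i t)
    (hη : 0 < η)
    (hwpos : ∀ t, 1 ≤ t → ∀ j, 1 ≤ j → j ≤ M t → 0 < w j t)
    (t : ℕ) (ht : 1 ≤ t) (hMt : 1 ≤ M t) :
    ∑ j ∈ Finset.Icc 1 (M t), w j (t+1)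
      ≤ (∑ j ∈ Finset.Icc 1 (M t), w j t) * Real.exp (-η * ℓ (xl t) (y t)) := by
  set N := M t with hN
  set S := ∑ j ∈ Finset.Icc 1 N, w j t with hSdef
  have hwpos' : ∀ j ∈ Finset.Icc 1 N, 0 < w j t := by
    intro j hj
    simp only [Finset.mem_Icc] at hj
    exact hwpos t ht j hj.1 hj.2
  have hS : 0 < S :=
    Finset.sum_pos hwpos' ⟨1, by simp [hMt]⟩
  have hmem : ∀ k : Fin N, 1 ≤ k.1 + 1 ∧ k.1 + 1 ≤ N := fun k => ⟨Nat.le_add_left 1 _, k.2⟩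
  have key := hexp (y t) N hMt (fun k => xe (k.1+1) t)
    (fun k => hxe (k.1+1) t ht (hmem k).1 (hmem k).2)
    (fun k => w (k.1+1) t / S)
    (fun k => div_nonneg (hwpos t ht _ (hmem k).1 (hmem k).2).le hS.le)
    (by
      rw [← Finset.sum_div, ghp_sum_fin_icc N (fun j => w j t), ← hSdef, div_self hS.ne'])
  have hpred : (∑ k : Fin N, (w (k.1+1) t / S) • xe (k.1+1) t) = xl t := by
    rw [hxl t ht]
    have : ∀ k : Fin N, (w (k.1+1) t / S) • xe (k.1+1) t
        = S⁻¹ • (w (k.1+1) t • xe (k.1+1) t) := by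
      intro k
      rw [div_eq_inv_mul, mul_smul]
    simp_rw [this, ← Finset.smul_sum]
    rw [ghp_sum_fin_icc N (fun j => w j t • xe j t)]
  rw [hpred] at key
  set A := ∑ k : Fin N, (w (k.1+1) t / S) * Real.exp (-η * ℓ (xe (k.1+1) t) (y t)) with hA
  have hAeq : A = S⁻¹ * ∑ j ∈ Finset.Icc 1 N, w j (t+1) := by
    rw [hA, ← ghp_sum_fin_icc N (fun j => w j (t+1)), Finset.mul_sum]
    apply Finset.sum_congr rfl
    intro k _
    rw [hwupd t ht (k.1+1) (hmem k).1 (hmem k).2]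
    ring
  have hApos : 0 < A := by
    apply Finset.sum_pos
    · intro k _
      exact mul_pos (div_pos (hwpos t ht _ (hmem k).1 (hmem k).2) hS) (Real.exp_pos _)
    · have : Nonempty (Fin N) := Fin.pos_iff_nonempty.mp hMt
      exact Finset.univ_nonempty
  -- from key : ℓ (xl t) (y t) ≤ -(1/η) * log A, derive A ≤ exp (-η * ℓ (xl t) (y t))
  have hlog : Real.log A ≤ -η * ℓ (xl t) (y t) := by
    have h2 : η * ℓ (xl t) (y t) ≤ η * (-(1/η) * Real.log A) :=
      mul_le_mul_of_nonneg_left key hη.le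
    have h3 : η * (-(1/η) * Real.log A) = -Real.log A := by
      rw [← mul_assoc, mul_neg, mul_one_div, div_self hη.ne', neg_mul, one_mul]
    linarith
  have hAle : A ≤ Real.exp (-η * ℓ (xl t) (y t)) := by
    rw [← Real.exp_log hApos]
    exact Real.exp_le_exp.mpr hlog
  have : ∑ j ∈ Finset.Icc 1 N, w j (t+1) = S * A := by
    rw [hAeq]; field_simp
  rw [this]
  calc S * A ≤ S * Real.exp (-η * ℓ (xl t) (y t)) :=
        mul_le_mul_of_nonneg_left hAle hS.le
    _ = _ := rfl

end Main


/-- **GrowingHedge with prior π_i = 1/(τ_i · m_{τ_i}) (bound (2) of the overview).**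
For every T ≥ 1 and every expert i ≤ M_T,
Σ_{t=τ_i}^T (ℓ_t − ℓ_{i,t}) ≤ (1/η) log m_{τ_i} + (1/η) log τ_i + (1/η) log(1 + log T). -/
theorem growingHedge_regret_entry_time_prior
    {E : Type*} [AddCommGroup E] [Module ℝ E] {Y : Type*}
    (X : Set E) (ℓ : E → Y → ℝ) (η : ℝ) (hη : 0 < η)
    (hexp : ∀ (yy : Y) (N : ℕ), 1 ≤ N → ∀ xs : Fin N → E, (∀ i, xs i ∈ X) →
      ∀ vv : Fin N → ℝ, (∀ i, 0 ≤ vv i) → (∑ i, vv i) = 1 →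
      ℓ (∑ i, vv i • xs i) yy ≤ -(1/η) * Real.log (∑ i, vv i * Real.exp (-η * ℓ (xs i) yy)))
    -- growing expert ensemble: M t experts at time t, nondecreasing, at least one
    (M : ℕ → ℕ) (hM0 : M 0 = 0) (hMpos : ∀ t, 1 ≤ t → 1 ≤ M t) (hMmono : Monotone M)
    -- m t = M t − M (t−1) is the number of experts entering at time t
    (m : ℕ → ℕ) (hm : ∀ t, 1 ≤ t → m t = M t - M (t-1))
    -- τ i is the entry time of expert i : the least t ≥ 1 with i ≤ M t
    (τ : ℕ → ℕ)
    (hτ : ∀ i t, 1 ≤ i → 1 ≤ t → i ≤ M t → 1 ≤ τ i ∧ i ≤ M (τ i) ∧ τ i ≤ t)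
    -- the prior weights π_i = 1/(τ_i · m_{τ_i})
    (π : ℕ → ℝ) (hπdef : ∀ i, 1 ≤ i → π i = 1 / ((τ i : ℝ) * (m (τ i) : ℝ)))
    (xe : ℕ → ℕ → E) (hxe : ∀ i t, 1 ≤ t → 1 ≤ i → i ≤ M t → xe i t ∈ X)
    (y : ℕ → Y) (xl : ℕ → E) (w : ℕ → ℕ → ℝ)
    -- GrowingHedge weights: initialization, update, introduction of new experts
    (hw1 : ∀ i, 1 ≤ i → i ≤ M 1 → w i 1 = π i)
    (hwupd : ∀ t, 1 ≤ t → ∀ i, 1 ≤ i → i ≤ M t →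
      w i (t+1) = w i t * Real.exp (-η * ℓ (xe i t) (y t)))
    (hwnew : ∀ t, 1 ≤ t → ∀ i, M t + 1 ≤ i → i ≤ M (t+1) →
      w i (t+1) = π i * Real.exp (-η * ∑ s ∈ Finset.Icc 1 t, ℓ (xl s) (y s)))
    -- GrowingHedge prediction
    (hxl : ∀ t, 1 ≤ t → xl t =
      (∑ i ∈ Finset.Icc 1 (M t), w i t)⁻¹ •
        ∑ i ∈ Finset.Icc 1 (M t), w i t • xe i t) :
    ∀ T : ℕ, 1 ≤ T → ∀ i : ℕ, 1 ≤ i → i ≤ M T →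
      ∑ t ∈ Finset.Icc (τ i) T, (ℓ (xl t) (y t) - ℓ (xe i t) (y t))
        ≤ (1/η) * Real.log (m (τ i) : ℝ) + (1/η) * Real.log (τ i : ℝ)
          + (1/η) * Real.log (1 + Real.log (T : ℝ)) := by
    -- notation
  set L : ℕ → ℝ := fun t => ∑ s ∈ Finset.Icc 1 t, ℓ (xl s) (y s) with hL
  -- entry-time facts
  have hτfacts : ∀ j t, 1 ≤ j → 1 ≤ t → j ≤ M t →
      1 ≤ τ j ∧ j ≤ M (τ j) ∧ τ j ≤ t ∧ M (τ j - 1) < j ∧ 1 ≤ m (τ j) := by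
    intro j t hj ht hjM
    obtain ⟨h1, h2, h3⟩ := hτ j t hj ht hjM
    have hlt : M (τ j - 1) < j := by
      rcases Nat.lt_or_ge 1 (τ j) with hgt | hle
      · by_contra hcon
        push_neg at hcon
        have := (hτ j (τ j - 1) hj (by omega) hcon).2.2
        omega
      · have : τ j = 1 := by omega
        rw [this]
        simpa [hM0] using Nat.one_le_iff_ne_zero.mp hj |> Nat.pos_of_ne_zero
    refine ⟨h1, h2, h3, hlt, ?_⟩
    rw [hm (τ j) h1]
    omega
  have hπpos : ∀ j t, 1 ≤ j → 1 ≤ t → j ≤ M t → 0 < π j := by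
    intro j t hj ht hjM
    obtain ⟨h1, _, _, _, hm1⟩ := hτfacts j t hj ht hjM
    rw [hπdef j hj]
    have : (0:ℝ) < (τ j : ℝ) * (m (τ j) : ℝ) := by
      apply mul_pos <;> exact_mod_cast by omega
    positivity
  -- positivity of weights
  have hwpos : ∀ t, 1 ≤ t → ∀ j, 1 ≤ j → j ≤ M t → 0 < w j t := by
    intro t
    induction t with
    | zero => omega
    | succ n ih =>
      intro _ j hj hjM
      rcases Nat.eq_zero_or_pos n with hn | hn
      · subst hn
        rw [hw1 j hj hjM]
        exact hπpos j 1 hj le_rfl hjM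
      · rcases le_or_gt j (M n) with hle | hgt
        · rw [hwupd n hn j hj hle]
          exact mul_pos (ih hn j hj hle) (Real.exp_pos _)
        · rw [hwnew n hn j (by omega) hjM]
          exact mul_pos (hπpos j (n+1) hj (by omega) hjM) (Real.exp_pos _)
  -- potential bound
  have hLsucc : ∀ t, 1 ≤ t → L t = L (t-1) + ℓ (xl t) (y t) := by
    intro t ht
    have h1 : t - 1 + 1 = t := by omega
    have h2 := Finset.sum_Icc_succ_top (a := 1) (b := t - 1) (by omega)
      (fun s => ℓ (xl s) (y s))
    rw [h1] at h2
    simpa [hL] using h2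
  have hΦ : ∀ t, 1 ≤ t →
      Real.exp (η * L (t-1)) * ∑ j ∈ Finset.Icc 1 (M t), w j t
        ≤ ∑ s ∈ Finset.Icc 1 t, (1 / (s : ℝ)) := by
    intro t ht
    induction t, ht using Nat.le_induction with
    | base =>
      have hM1 : 1 ≤ M 1 := hMpos 1 le_rfl
      have hsum : ∑ j ∈ Finset.Icc 1 (M 1), w j 1 = 1 := by
        have hval : ∀ j ∈ Finset.Icc 1 (M 1), w j 1 = 1 / (M 1 : ℝ) := by
          intro j hj
          simp only [Finset.mem_Icc] at hj
          obtain ⟨h1, _, h3⟩ := hτ j 1 hj.1 le_rfl hj.2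
          have hτ1 : τ j = 1 := le_antisymm h3 h1
          rw [hw1 j hj.1 hj.2, hπdef j hj.1, hτ1, hm 1 le_rfl]
          simp [hM0]
        rw [Finset.sum_congr rfl hval, Finset.sum_const, Nat.card_Icc]
        have hM1ne : (M 1 : ℝ) ≠ 0 := Nat.cast_ne_zero.mpr (by omega)
        simp only [Nat.add_sub_cancel, nsmul_eq_mul]
        field_simp
      have hL0 : L (1 - 1) = 0 := by simp [hL]
      rw [hL0, hsum]
      simp
    | succ t ht ih =>
      simp only [Nat.add_sub_cancel]
      have hMle : M t ≤ M (t+1) := hMmono (Nat.le_succ t)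
      have hsplit : ∑ j ∈ Finset.Icc 1 (M (t+1)), w j (t+1)
          = (∑ j ∈ Finset.Icc 1 (M t), w j (t+1))
            + ∑ j ∈ Finset.Icc (M t + 1) (M (t+1)), w j (t+1) := by
        have h2 : Finset.Ioc (M t) (M (t+1)) = Finset.Icc (M t + 1) (M (t+1)) := by
          ext x; simp only [Finset.mem_Ioc, Finset.mem_Icc]; omega
        have h3 := Finset.sum_Ioc_consecutive (fun j => w j (t+1))
          (Nat.zero_le (M t)) hMle
        rw [ghp_Ioc_zero, ghp_Ioc_zero, h2] at h3
        exact h3.symm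
      have hnewval : ∀ j ∈ Finset.Icc (M t + 1) (M (t+1)),
          w j (t+1) = 1 / (((t+1 : ℕ) : ℝ) * (m (t+1) : ℝ)) * Real.exp (-η * L t) := by
        intro j hj
        simp only [Finset.mem_Icc] at hj
        have hj1 : 1 ≤ j := by omega
        have hτj : τ j = t + 1 := by
          obtain ⟨h1, h2, h3⟩ := hτ j (t+1) hj1 (by omega) hj.2
          by_contra hne
          have hlt : τ j ≤ t := by omega
          have : j ≤ M t := le_trans h2 (hMmono hlt)
          omega
        rw [hwnew t ht j hj.1 hj.2, hπdef j hj1, hτj]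
      have hnewsum : ∑ j ∈ Finset.Icc (M t + 1) (M (t+1)), w j (t+1)
          ≤ (1 / ((t+1 : ℕ) : ℝ)) * Real.exp (-η * L t) := by
        rw [Finset.sum_congr rfl hnewval, Finset.sum_const, Nat.card_Icc]
        have hcard : M (t+1) + 1 - (M t + 1) = M (t+1) - M t := by omega
        rw [hcard, nsmul_eq_mul]
        have hmeq : m (t+1) = M (t+1) - M t := by
          rw [hm (t+1) (by omega)]
          simp
        rcases Nat.eq_zero_or_pos (M (t+1) - M t) with h0 | hpos
        · rw [h0]
          simp
          positivity
        · have : ((M (t+1) - M t : ℕ) : ℝ) * (1 / (((t+1 : ℕ) : ℝ) * (m (t+1) : ℝ)))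
              = 1 / ((t+1 : ℕ) : ℝ) := by
            rw [hmeq]
            have hne1 : ((t+1 : ℕ) : ℝ) ≠ 0 := Nat.cast_ne_zero.mpr (by omega)
            have hne2 : ((M (t+1) - M t : ℕ) : ℝ) ≠ 0 := Nat.cast_ne_zero.mpr (by omega)
            rw [one_div (((t+1 : ℕ) : ℝ) * _), mul_inv, ← mul_assoc,
              mul_comm (((M (t+1) - M t : ℕ) : ℝ)) _, mul_assoc,
              mul_inv_cancel₀ hne2, mul_one, one_div]
          rw [← mul_assoc, this]
      have hstept := ghp_step X ℓ η M w xe y xl hexp hxe hwupd hxl hη hwpos t ht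
        (hMpos t ht)
      have hexp1 : Real.exp (η * L t) * Real.exp (-η * ℓ (xl t) (y t))
          = Real.exp (η * L (t-1)) := by
        rw [hLsucc t ht, ghp_exp_mul, mul_assoc, ← Real.exp_add]
        norm_num
      have hexp2 : Real.exp (η * L t) * Real.exp (-η * L t) = 1 := by
        rw [← Real.exp_add]
        norm_num
      have hHsucc : ∑ s ∈ Finset.Icc 1 (t+1), (1 / (s : ℝ))
          = (∑ s ∈ Finset.Icc 1 t, (1 / (s : ℝ))) + 1 / ((t+1 : ℕ) : ℝ) := by
        exact Finset.sum_Icc_succ_top (by omega) _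
      rw [hsplit, mul_add, hHsucc]
      have hb1 : Real.exp (η * L t) * ∑ j ∈ Finset.Icc 1 (M t), w j (t+1)
          ≤ ∑ s ∈ Finset.Icc 1 t, (1 / (s : ℝ)) := by
        calc Real.exp (η * L t) * ∑ j ∈ Finset.Icc 1 (M t), w j (t+1)
            ≤ Real.exp (η * L t)
              * ((∑ j ∈ Finset.Icc 1 (M t), w j t) * Real.exp (-η * ℓ (xl t) (y t))) :=
              mul_le_mul_of_nonneg_left hstept (Real.exp_pos _).le
          _ = Real.exp (η * L (t-1)) * ∑ j ∈ Finset.Icc 1 (M t), w j t := by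
              rw [← hexp1]; ring
          _ ≤ _ := ih
      have hb2 : Real.exp (η * L t) * ∑ j ∈ Finset.Icc (M t + 1) (M (t+1)), w j (t+1)
          ≤ 1 / ((t+1 : ℕ) : ℝ) := by
        calc Real.exp (η * L t) * ∑ j ∈ Finset.Icc (M t + 1) (M (t+1)), w j (t+1)
            ≤ Real.exp (η * L t) * ((1 / ((t+1 : ℕ) : ℝ)) * Real.exp (-η * L t)) :=
              mul_le_mul_of_nonneg_left hnewsum (Real.exp_pos _).le
          _ = (Real.exp (η * L t) * Real.exp (-η * L t)) * (1 / ((t+1 : ℕ) : ℝ)) := by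
              ring
          _ = 1 / ((t+1 : ℕ) : ℝ) := by rw [hexp2, one_mul]
      push_cast at hb2 ⊢
      linarith
  -- final combination
  intro T hT i hi hiMT
  obtain ⟨hτ1, hτM, hτT, hτlt, hmτ⟩ := hτfacts i T hi hT hiMT
  have hπi : 0 < π i := hπpos i T hi hT hiMT
  have hiMle : ∀ t, τ i ≤ t → i ≤ M t := fun t htt => le_trans hτM (hMmono htt)
  -- entry weight
  have hentry : w i (τ i) = π i * Real.exp (-η * L (τ i - 1)) := by
    rcases Nat.lt_or_ge 1 (τ i) with hgt | hle
    · have hu : 1 ≤ τ i - 1 := by omega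
      have h1 : τ i - 1 + 1 = τ i := by omega
      have h2 := hwnew (τ i - 1) hu i (by omega) (by rw [h1]; exact hτM)
      rw [h1] at h2
      simpa [hL] using h2
    · have h1 : τ i = 1 := by omega
      rw [h1, hw1 i hi (h1 ▸ hτM)]
      simp [hL]
  -- expert weight formula at T+1
  have hexpadd : ∀ a b : ℝ,
      Real.exp (-η * (a + b)) = Real.exp (-η * a) * Real.exp (-η * b) := by
    intro a b
    rw [← Real.exp_add]
    ring_nf
  have hwT : ∀ d, τ i + d ≤ T →
      w i (τ i + d + 1) = π i * Real.exp (-η * L (τ i - 1))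
        * Real.exp (-η * ∑ s ∈ Finset.Icc (τ i) (τ i + d), ℓ (xe i s) (y s)) := by
    intro d
    induction d with
    | zero =>
      intro _
      simp only [Nat.add_zero]
      rw [hwupd (τ i) hτ1 i hi (hiMle _ le_rfl), hentry, Finset.Icc_self,
        Finset.sum_singleton, mul_assoc]
    | succ d ih =>
      intro hd
      have hd' : τ i + d ≤ T := by omega
      have he : τ i + (d+1) = (τ i + d) + 1 := by ring
      rw [he, hwupd (τ i + d + 1) (by omega) i hi (hiMle _ (by omega)), ih hd',
        Finset.sum_Icc_succ_top (by omega : τ i ≤ τ i + d + 1), hexpadd]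
      ring
  have hwiT := hwT (T - τ i) (by omega)
  rw [show τ i + (T - τ i) = T from by omega] at hwiT
  -- total weight bound after update at time T
  have hstepT := ghp_step X ℓ η M w xe y xl hexp hxe hwupd hxl hη hwpos T hT (hMpos T hT)
  have hΦT := hΦ T hT
  set H := ∑ s ∈ Finset.Icc 1 T, (1 / (s : ℝ)) with hH
  have hexp1 : Real.exp (η * L T) * Real.exp (-η * ℓ (xl T) (y T))
      = Real.exp (η * L (T-1)) := by
    rw [hLsucc T hT, ghp_exp_mul, mul_assoc, ← Real.exp_add]
    norm_num
  have hWT1 : Real.exp (η * L T) * ∑ j ∈ Finset.Icc 1 (M T), w j (T+1) ≤ H := by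
    calc Real.exp (η * L T) * ∑ j ∈ Finset.Icc 1 (M T), w j (T+1)
        ≤ Real.exp (η * L T)
          * ((∑ j ∈ Finset.Icc 1 (M T), w j T) * Real.exp (-η * ℓ (xl T) (y T))) :=
          mul_le_mul_of_nonneg_left hstepT (Real.exp_pos _).le
      _ = Real.exp (η * L (T-1)) * ∑ j ∈ Finset.Icc 1 (M T), w j T := by
          rw [← hexp1]; ring
      _ ≤ H := hΦT
  have hwi1 : w i (T+1) ≤ ∑ j ∈ Finset.Icc 1 (M T), w j (T+1) := by
    apply Finset.single_le_sum (f := fun j => w j (T+1))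
    · intro j hj
      simp only [Finset.mem_Icc] at hj
      rw [hwupd T hT j hj.1 hj.2]
      exact (mul_pos (hwpos T hT j hj.1 hj.2) (Real.exp_pos _)).le
    · exact Finset.mem_Icc.mpr ⟨hi, hiMT⟩
  have hkey0 : Real.exp (η * L T) * w i (T+1) ≤ H :=
    le_trans (mul_le_mul_of_nonneg_left hwi1 (Real.exp_pos _).le) hWT1
  -- split L T
  set Sl := ∑ t ∈ Finset.Icc (τ i) T, ℓ (xl t) (y t) with hSl
  set Si := ∑ t ∈ Finset.Icc (τ i) T, ℓ (xe i t) (y t) with hSi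
  have hLsplit : L T = L (τ i - 1) + Sl := by
    have e2 : Finset.Ioc (τ i - 1) T = Finset.Icc (τ i) T := by
      ext x; simp only [Finset.mem_Ioc, Finset.mem_Icc]; omega
    have h3 := Finset.sum_Ioc_consecutive (fun s => ℓ (xl s) (y s))
      (Nat.zero_le (τ i - 1)) (by omega : τ i - 1 ≤ T)
    rw [ghp_Ioc_zero, ghp_Ioc_zero, e2] at h3
    exact h3.symm
  have hmain : π i * Real.exp (η * (Sl - Si)) ≤ H := by
    have hrw : Real.exp (η * L T) * w i (T+1) = π i * Real.exp (η * (Sl - Si)) := by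
      rw [hwiT, hLsplit, ghp_exp_mul]
      rw [show (-η * L (τ i - 1)) = -(η * L (τ i - 1)) by ring, Real.exp_neg]
      rw [show (-η * Si) = -(η * Si) by ring, Real.exp_neg]
      rw [show η * (Sl - Si) = η * Sl - η * Si by ring, Real.exp_sub]
      have h1 : Real.exp (η * L (τ i - 1)) ≠ 0 := Real.exp_ne_zero _
      have h2 : Real.exp (η * Si) ≠ 0 := Real.exp_ne_zero _
      field_simp
    linarith [hrw ▸ hkey0]
  have hHpos : 0 < H := ghp_harm_pos T hT
  have hlog2 : η * (Sl - Si) ≤ Real.log (H / π i) :=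
    (Real.le_log_iff_exp_le (div_pos hHpos hπi)).mpr
      (by rw [le_div_iff₀ hπi]; linarith [hmain, mul_comm (π i) (Real.exp (η * (Sl - Si)))])
  have hτne : ((τ i : ℕ) : ℝ) ≠ 0 := Nat.cast_ne_zero.mpr (by omega)
  have hmne : ((m (τ i) : ℕ) : ℝ) ≠ 0 := Nat.cast_ne_zero.mpr (by omega)
  have hlogπ : Real.log (H / π i)
      = Real.log H + Real.log (τ i : ℝ) + Real.log (m (τ i) : ℝ) := by
    rw [Real.log_div hHpos.ne' hπi.ne', hπdef i hi,
      Real.log_div one_ne_zero (mul_ne_zero hτne hmne), Real.log_one,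
      Real.log_mul hτne hmne]
    ring
  have hlogH : Real.log H ≤ Real.log (1 + Real.log T) :=
    Real.log_le_log hHpos (ghp_harm_le T)
  have htotal : η * (Sl - Si)
      ≤ Real.log (m (τ i) : ℝ) + Real.log (τ i : ℝ) + Real.log (1 + Real.log T) := by
    linarith
  have hsub : ∑ t ∈ Finset.Icc (τ i) T, (ℓ (xl t) (y t) - ℓ (xe i t) (y t)) = Sl - Si :=
    Finset.sum_sub_distrib _ _
  rw [hsub]
  have h9 : Sl - Si
      ≤ (Real.log (m (τ i) : ℝ) + Real.log (τ i : ℝ) + Real.log (1 + Real.log T)) / η := by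
    rw [le_div_iff₀ hη, mul_comm]
    exact htotal
  calc Sl - Si ≤ _ := h9
    _ = (1/η) * Real.log (m (τ i) : ℝ) + (1/η) * Real.log (τ i : ℝ)
        + (1/η) * Real.log (1 + Real.log (T : ℝ)) := by ring
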